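/- Let σ(x) = Σ_{j=1}^{∞} (1/√2)·exp(−(x−j)²/2). Then σ is 1-Lipschitz: |σ(x) − σ(y)| ≤ |x − y| for all x, y ∈ ℝ. -/

import Mathlib

set_option linter.unnecessarySeqFocus false

noncomputable def gaussPhi (x : ℝ) : ℝ := (1 / Real.sqrt 2) * Real.exp (-x ^ 2 / 2)

noncomputable def gaussSigma (x : ℝ) : ℝ := ∑' j : ℕ, gaussPhi (x - (j + 1))


lemma exp_neg_le (a : ℝ) (ha : 0 ≤ a) : Real.exp (-a) ≤ 1/(1+a+a^2/2) := by
  rw [Real.exp_neg, one_div]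
  exact inv_anti₀ (by positivity) (Real.quadratic_le_exp_of_nonneg ha)

lemma poly_bound (s : ℝ) (hs : 0 ≤ s) :
    8*s/(8+4*s^2+s^4) + 8*(s+2)/(8+4*(s+1)^2+(s+1)^4) ≤ 141/100 := by
  have d1 : (0:ℝ) < 8+4*s^2+s^4 := by positivity
  have d2 : (0:ℝ) < 8+4*(s+1)^2+(s+1)^4 := by positivity
  rw [div_add_div _ _ (ne_of_gt d1) (ne_of_gt d2), div_le_iff₀ (by positivity)]
  nlinarith [sq_nonneg s, sq_nonneg (s-1), sq_nonneg (s*s-1), sq_nonneg (s*s-2*s), sq_nonneg (s*s*s-1), mul_nonneg hs hs, sq_nonneg (s*s*s*s - 1), mul_nonneg (mul_nonneg hs hs) hs]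

lemma Fbound (s : ℝ) (hs : 0 ≤ s) :
    s * Real.exp (-s^2/2) + (s+2) * Real.exp (-(s+1)^2/2) ≤ Real.sqrt 2 := by
  have h1 : Real.exp (-s^2/2) ≤ 1/(1+s^2/2+(s^2/2)^2/2) := by
    have := exp_neg_le (s^2/2) (by positivity)
    convert this using 2 <;> ring
  have h2 : Real.exp (-(s+1)^2/2) ≤ 1/(1+(s+1)^2/2+((s+1)^2/2)^2/2) := by
    have := exp_neg_le ((s+1)^2/2) (by positivity)
    convert this using 2 <;> ring
  have e1 : s * Real.exp (-s^2/2) ≤ 8*s/(8+4*s^2+s^4) := by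
    calc s * Real.exp (-s^2/2) ≤ s * (1/(1+s^2/2+(s^2/2)^2/2)) :=
          mul_le_mul_of_nonneg_left h1 hs
      _ = 8*s/(8+4*s^2+s^4) := by
          rw [eq_div_iff (by positivity)]; field_simp; ring
  have e2 : (s+2) * Real.exp (-(s+1)^2/2) ≤ 8*(s+2)/(8+4*(s+1)^2+(s+1)^4) := by
    calc (s+2) * Real.exp (-(s+1)^2/2) ≤ (s+2) * (1/(1+(s+1)^2/2+((s+1)^2/2)^2/2)) :=
          mul_le_mul_of_nonneg_left h2 (by linarith)
      _ = 8*(s+2)/(8+4*(s+1)^2+(s+1)^4) := by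
          rw [eq_div_iff (by positivity)]; field_simp; ring
  have hsq : (141/100 : ℝ) ≤ Real.sqrt 2 := by
    rw [show (141/100:ℝ) = Real.sqrt ((141/100)^2) from Real.sqrt_sq (by norm_num) |>.symm]
    exact Real.sqrt_le_sqrt (by norm_num)
  linarith [poly_bound s hs]



lemma step_lemma (b : ℝ) (hb : 2 ≤ b) :
    (b+1) * Real.exp (-b^2/2) ≤ Real.exp (-(b-1)^2/2) := by
  have h : Real.exp (-(b-1)^2/2) = Real.exp (b - 1/2) * Real.exp (-b^2/2) := by
    rw [← Real.exp_add]; ring_nf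
  rw [h]
  have hq := Real.quadratic_le_exp_of_nonneg (x := b - 1/2) (by linarith)
  have : b + 1 ≤ Real.exp (b - 1/2) := by nlinarith
  exact mul_le_mul_of_nonneg_right this (Real.exp_pos _).le

lemma key_partial (s : ℝ) (hs : 0 ≤ s) (n : ℕ) :
    ∑ k ∈ Finset.range n, (s + k) * Real.exp (-(s+k)^2/2) ≤ Real.sqrt 2 := by
  set f : ℕ → ℝ := fun k => (s + k) * Real.exp (-(s+k)^2/2) with hf
  have hnonneg : ∀ k, 0 ≤ f k := fun k => by
    apply mul_nonneg (by positivity) (Real.exp_pos _).le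
  have h1 : ∑ k ∈ Finset.range n, f k ≤ ∑ k ∈ Finset.range (2+n), f k := by
    apply Finset.sum_le_sum_of_subset_of_nonneg
    · exact Finset.range_subset_range.2 (by omega)
    · intro i _ _; exact hnonneg i
  refine h1.trans ?_
  rw [Finset.sum_range_add]
  set g : ℕ → ℝ := fun k => Real.exp (-(s+k+1)^2/2) with hg
  have htail : ∑ k ∈ Finset.range n, f (2+k) ≤ g 0 - g n := by
    rw [show g 0 - g n = ∑ k ∈ Finset.range n, (g k - g (k+1)) from
      (Finset.sum_range_sub' g n).symm]
    apply Finset.sum_le_sum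
    intro k _
    have hb : (2:ℝ) ≤ s + (2+k) := by
      have : (0:ℝ) ≤ (k:ℝ) := Nat.cast_nonneg k
      linarith
    have := step_lemma (s + (2+k)) hb
    simp only [hf, hg]
    push_cast
    ring_nf at this ⊢
    linarith [this, Real.exp_pos (-(s + (2+(k:ℝ)))^2/2)]
  have hsum2 : ∑ k ∈ Finset.range 2, f k = f 0 + f 1 := by
    simp [Finset.sum_range_succ]
  have hf0 : f 0 = s * Real.exp (-s^2/2) := by simp [hf]
  have hf1 : f 1 = (s+1) * Real.exp (-(s+1)^2/2) := by norm_num [hf]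
  have hg0 : g 0 = Real.exp (-(s+1)^2/2) := by norm_num [hg]
  have hgn : 0 ≤ g n := (Real.exp_pos _).le
  have := Fbound s hs
  linarith [htail]

lemma key_summable (s : ℝ) (hs : 0 ≤ s) :
    Summable (fun k : ℕ => (s + k) * Real.exp (-(s+k)^2/2)) :=
  summable_of_sum_range_le
    (fun k => mul_nonneg (by positivity) (Real.exp_pos _).le)
    (fun n => key_partial s hs n)

lemma key (s : ℝ) (hs : 0 ≤ s) :
    ∑' k : ℕ, (s + k) * Real.exp (-(s+k)^2/2) ≤ Real.sqrt 2 :=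
  Real.tsum_le_of_sum_range_le
    (fun k => mul_nonneg (by positivity) (Real.exp_pos _).le)
    (fun n => key_partial s hs n)




lemma sqrt2_pos : (0:ℝ) < Real.sqrt 2 := Real.sqrt_pos.2 (by norm_num)

lemma inv_sqrt2_mul_sqrt2 : (1 / Real.sqrt 2) * Real.sqrt 2 = 1 :=
  one_div_mul_cancel (ne_of_gt sqrt2_pos)

lemma gaussPhi_pos (x : ℝ) : 0 < gaussPhi x := by
  unfold gaussPhi; positivity

lemma gaussPhi_flip (t a : ℝ) : gaussPhi (t - a) = (1 / Real.sqrt 2) * Real.exp (-(a-t)^2/2) := by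
  unfold gaussPhi; ring_nf

-- exp(-v^2/2) ≤ exp(1/2 - v)
lemma exp_sq_le (v : ℝ) : Real.exp (-v^2/2) ≤ Real.exp (1/2 - v) :=
  Real.exp_le_exp.2 (by nlinarith [sq_nonneg (v-1)])

-- summability of the sigma series
lemma summable_phi (x : ℝ) : Summable (fun j : ℕ => gaussPhi (x - (j + 1))) := by
  refine Summable.of_nonneg_of_le (fun j => (gaussPhi_pos _).le)
    (f := fun j : ℕ => (1/Real.sqrt 2) * Real.exp (x - 1/2) * Real.exp (-1) ^ j) ?_ ?_
  · intro j
    rw [gaussPhi_flip]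
    have h1 : Real.exp (-((j:ℝ)+1-x)^2/2) ≤ Real.exp (x - 1/2) * Real.exp (-1) ^ j := by
      calc Real.exp (-((j:ℝ)+1-x)^2/2) ≤ Real.exp (1/2 - ((j:ℝ)+1-x)) := exp_sq_le _
        _ = Real.exp (x - 1/2) * Real.exp (-1) ^ j := by
            rw [← Real.exp_nat_mul, ← Real.exp_add]; ring_nf
    calc (1/Real.sqrt 2) * Real.exp (-((j:ℝ)+1-x)^2/2)
        ≤ (1/Real.sqrt 2) * (Real.exp (x-1/2) * Real.exp (-1)^j) :=
          mul_le_mul_of_nonneg_left h1 (by positivity)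
      _ = (1/Real.sqrt 2) * Real.exp (x-1/2) * Real.exp (-1)^j := by ring
  · exact (summable_geometric_of_lt_one (Real.exp_pos _).le
      (Real.exp_lt_one_iff.2 (by norm_num))).mul_left _

-- the derivative-series bound
lemma deriv_sum_bound (t : ℝ) : |∑' j : ℕ, (-(t - ((j:ℝ) + 1)) * gaussPhi (t - ((j:ℝ) + 1)))| ≤ 1 := by
  set f : ℕ → ℝ := fun j => -(t - ((j:ℝ)+1)) * gaussPhi (t - ((j:ℝ)+1)) with hf
  -- summability of f
  have hsummf : Summable f := by
    apply Summable.of_norm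
    refine Summable.of_nonneg_of_le (fun j => norm_nonneg _)
      (f := fun j : ℕ => (|t|+(j:ℝ)+1) * ((1/Real.sqrt 2) * Real.exp (t - 1/2) * Real.exp (-1) ^ j)) ?_ ?_
    · intro j
      rw [Real.norm_eq_abs, hf]
      simp only
      rw [abs_mul, abs_neg, abs_of_pos (gaussPhi_pos _), gaussPhi_flip]
      have habs : |t - ((j:ℝ)+1)| ≤ |t| + (j:ℝ) + 1 := by
        have hj : (0:ℝ) ≤ (j:ℝ) := Nat.cast_nonneg j
        rcases abs_cases (t - ((j:ℝ)+1)) with ⟨h1,h2⟩|⟨h1,h2⟩ <;>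
          rcases abs_cases t with ⟨h3,h4⟩|⟨h3,h4⟩ <;> linarith
      have h1 : Real.exp (-((j:ℝ)+1-t)^2/2) ≤ Real.exp (t - 1/2) * Real.exp (-1) ^ j := by
        calc Real.exp (-((j:ℝ)+1-t)^2/2) ≤ Real.exp (1/2 - ((j:ℝ)+1-t)) := exp_sq_le _
          _ = Real.exp (t - 1/2) * Real.exp (-1) ^ j := by
              rw [← Real.exp_nat_mul, ← Real.exp_add]; ring_nf
      calc |t - ((j:ℝ)+1)| * ((1/Real.sqrt 2) * Real.exp (-((j:ℝ)+1-t)^2/2))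
          ≤ (|t|+(j:ℝ)+1) * ((1/Real.sqrt 2) * (Real.exp (t-1/2) * Real.exp (-1)^j)) := by
            apply mul_le_mul habs (mul_le_mul_of_nonneg_left h1 (by positivity))
              (by positivity) (by positivity)
        _ = (|t|+(j:ℝ)+1) * ((1/Real.sqrt 2) * Real.exp (t-1/2) * Real.exp (-1)^j) := by ring
    · -- summability of (|t|+j+1)*c*r^j
      have hr : ‖Real.exp (-1)‖ < 1 := by
        rw [Real.norm_eq_abs, abs_of_pos (Real.exp_pos _)]
        exact Real.exp_lt_one_iff.2 (by norm_num)
      have h1 : Summable (fun j : ℕ => (j:ℝ) * Real.exp (-1) ^ j) := by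
        have := summable_pow_mul_geometric_of_norm_lt_one 1 hr (R := ℝ)
        simpa using this
      have h2 : Summable (fun j : ℕ => (|t|+1) * Real.exp (-1) ^ j) :=
        (summable_geometric_of_lt_one (Real.exp_pos _).le
          (Real.exp_lt_one_iff.2 (by norm_num))).mul_left _
      have h3 : Summable (fun j : ℕ => ((j:ℝ) + (|t|+1)) * Real.exp (-1) ^ j) := by
        have := h1.add h2
        apply this.congr
        intro j; ring
      apply (h3.mul_left ((1/Real.sqrt 2) * Real.exp (t - 1/2))).congr
      intro j; ring
  have hphi : ∀ j : ℕ, f j = (1/Real.sqrt 2) * (((j:ℝ)+1 - t) * Real.exp (-((j:ℝ)+1 - t)^2/2)) := by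
    intro j; rw [hf]; simp only
    rw [gaussPhi_flip]; ring
  have hnegphi : ∀ j : ℕ, -f j = (1/Real.sqrt 2) * ((t - ((j:ℝ)+1)) * Real.exp (-((j:ℝ)+1 - t)^2/2)) := by
    intro j; rw [hphi j]; ring
  have hsummabs : Summable (fun j => |f j|) := hsummf.abs
  -- upper bound
  have hup : ∑' j, f j ≤ 1 := by
    set fp : ℕ → ℝ := fun j => max (f j) 0 with hfp
    have hsummfp : Summable fp :=
      Summable.of_nonneg_of_le (fun j => le_max_right _ _)
        (fun j => max_le (le_abs_self _) (abs_nonneg _)) hsummabs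
    have hle : ∑' j, f j ≤ ∑' j, fp j :=
      Summable.tsum_le_tsum (fun j => le_max_left _ _) hsummf hsummfp
    set m := Nat.ceil (t - 1) with hm
    set s := (m:ℝ) + 1 - t with hs
    have hs0 : 0 ≤ s := by
      have := Nat.le_ceil (t-1); rw [hs]; simp only [hm]; linarith
    have hzero : ∀ j < m, fp j = 0 := by
      intro j hj
      have hmpos : 0 < m := lt_of_le_of_lt (Nat.zero_le j) hj
      have ht1 : 0 < t - 1 := by
        have := Nat.ceil_pos.1 (hm ▸ hmpos); linarith
      have hmt : (m:ℝ) < t := by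
        have h2 := Nat.ceil_lt_add_one (le_of_lt ht1)
        rw [hm]; linarith
      have hjm : (j:ℝ) + 1 ≤ (m:ℝ) := by exact_mod_cast hj
      have hfj : f j ≤ 0 := by
        rw [hphi j]
        have he := (Real.exp_pos (-((j:ℝ)+1 - t)^2/2)).le
        have hc : (0:ℝ) ≤ 1/Real.sqrt 2 := by positivity
        nlinarith [mul_nonneg hc he]
      simp only [hfp]; exact max_eq_right hfj
    have hsplit := Summable.sum_add_tsum_nat_add (f := fp) m hsummfp
    have hsum0 : ∑ j ∈ Finset.range m, fp j = 0 :=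
      Finset.sum_eq_zero (fun j hj => hzero j (Finset.mem_range.1 hj))
    have htail : ∀ k : ℕ, fp (k + m) = (1/Real.sqrt 2) * ((s + k) * Real.exp (-(s+k)^2/2)) := by
      intro k
      have harg : ((k + m : ℕ):ℝ) + 1 - t = s + k := by push_cast; rw [hs]; ring
      have hk : (0:ℝ) ≤ (k:ℝ) := Nat.cast_nonneg k
      have hnn : 0 ≤ f (k + m) := by
        rw [hphi (k+m), harg]
        have : 0 ≤ s + k := by linarith
        positivity
      simp only [hfp]
      rw [max_eq_left hnn, hphi (k+m), harg]
    calc ∑' j, f j ≤ ∑' j, fp j := hle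
      _ = ∑ j ∈ Finset.range m, fp j + ∑' k, fp (k + m) := hsplit.symm
      _ = ∑' k : ℕ, (1/Real.sqrt 2) * ((s + (k:ℝ)) * Real.exp (-(s+(k:ℝ))^2/2)) := by
          rw [hsum0, zero_add]; exact tsum_congr htail
      _ = (1/Real.sqrt 2) * ∑' k : ℕ, ((s + (k:ℝ)) * Real.exp (-(s+(k:ℝ))^2/2)) := tsum_mul_left
      _ ≤ (1/Real.sqrt 2) * Real.sqrt 2 :=
          mul_le_mul_of_nonneg_left (key s hs0) (by positivity)
      _ = 1 := inv_sqrt2_mul_sqrt2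
  -- lower bound
  have hlow : ∑' j, (-f j) ≤ 1 := by
    set fn : ℕ → ℝ := fun j => max (-f j) 0 with hfn
    have hsummnf : Summable (fun j => -f j) := hsummf.neg
    have hsummfn : Summable fn :=
      Summable.of_nonneg_of_le (fun j => le_max_right _ _)
        (fun j => max_le (neg_le_abs _) (abs_nonneg _)) hsummabs
    have hle : ∑' j, (-f j) ≤ ∑' j, fn j :=
      Summable.tsum_le_tsum (fun j => le_max_left _ _) hsummnf hsummfn
    set M := Nat.floor t with hM
    have htailz : ∀ k : ℕ, fn (k + M) = 0 := by
      intro k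
      have hlt : t < (M:ℝ) + 1 := by rw [hM]; exact_mod_cast Nat.lt_floor_add_one t
      have hk : (0:ℝ) ≤ (k:ℝ) := Nat.cast_nonneg k
      have hnf : -f (k + M) ≤ 0 := by
        rw [hnegphi (k+M)]
        have he := (Real.exp_pos (-(((k+M:ℕ):ℝ)+1 - t)^2/2)).le
        have hc : (0:ℝ) ≤ 1/Real.sqrt 2 := by positivity
        have hneg : t - (((k+M:ℕ):ℝ)+1) ≤ 0 := by push_cast; linarith
        nlinarith [mul_nonneg hc he]
      simp only [hfn]; exact max_eq_right hnf
    have hsplit := Summable.sum_add_tsum_nat_add (f := fn) M hsummfn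
    have htz : ∑' k : ℕ, fn (k + M) = 0 := by
      rw [tsum_congr htailz]; exact tsum_zero
    have hfin : ∑' j, fn j = ∑ j ∈ Finset.range M, fn j := by
      rw [← hsplit, htz, add_zero]
    rcases Nat.eq_zero_or_pos M with hM0 | hMpos
    · rw [hfin, hM0] at hle; simpa using hle.trans (by norm_num)
    · have ht1 : 1 ≤ t := by
        have := Nat.floor_pos.1 (hM ▸ hMpos); exact this
      set s' := t - (M:ℝ) with hs'
      have hs'0 : 0 ≤ s' := by
        have := Nat.floor_le (le_trans zero_le_one ht1)
        rw [hs', hM]; linarith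
      have hrefl := Finset.sum_range_reflect fn M
      have hterm : ∀ j ∈ Finset.range M, fn (M - 1 - j) =
          (1/Real.sqrt 2) * ((s' + j) * Real.exp (-(s'+j)^2/2)) := by
        intro j hj
        have hjM : j < M := Finset.mem_range.1 hj
        have hcast : ((M - 1 - j : ℕ):ℝ) = (M:ℝ) - 1 - (j:ℝ) := by
          rw [Nat.cast_sub (by omega), Nat.cast_sub (by omega)]; norm_num
        have hk : (0:ℝ) ≤ (j:ℝ) := Nat.cast_nonneg j
        have harg : t - (((M-1-j:ℕ):ℝ) + 1) = s' + j := by rw [hcast, hs']; ring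
        have harg2 : -(((M-1-j:ℕ):ℝ)+1 - t)^2/2 = -(s'+j)^2/2 := by
          have : ((M-1-j:ℕ):ℝ)+1 - t = -(s' + j) := by rw [hcast, hs']; ring
          rw [this]; ring
        have hnn : 0 ≤ -f (M-1-j) := by
          rw [hnegphi, harg, harg2]
          have : 0 ≤ s' + j := by linarith
          positivity
        simp only [hfn]
        rw [max_eq_left hnn, hnegphi, harg, harg2]
      calc ∑' j, (-f j) ≤ ∑' j, fn j := hle
        _ = ∑ j ∈ Finset.range M, fn j := hfin
        _ = ∑ j ∈ Finset.range M, fn (M - 1 - j) := hrefl.symm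
        _ = ∑ j ∈ Finset.range M, (1/Real.sqrt 2) * ((s' + j) * Real.exp (-(s'+j)^2/2)) :=
            Finset.sum_congr rfl hterm
        _ = (1/Real.sqrt 2) * ∑ j ∈ Finset.range M, ((s' + j) * Real.exp (-(s'+j)^2/2)) := by
            rw [Finset.mul_sum]
        _ ≤ (1/Real.sqrt 2) * ∑' j : ℕ, ((s' + j) * Real.exp (-(s'+j)^2/2)) := by
            apply mul_le_mul_of_nonneg_left _ (by positivity)
            exact Summable.sum_le_tsum _ (fun i _ => by positivity) (key_summable s' hs'0)
        _ ≤ (1/Real.sqrt 2) * Real.sqrt 2 :=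
            mul_le_mul_of_nonneg_left (key s' hs'0) (by positivity)
        _ = 1 := inv_sqrt2_mul_sqrt2
  rw [tsum_neg] at hlow
  exact abs_le.2 ⟨by linarith, hup⟩





lemma phi_hasDeriv (t : ℝ) : HasDerivAt gaussPhi (-t * gaussPhi t) t := by
  have h1 : HasDerivAt (fun x : ℝ => -x^2/2) (-t) t := by
    have : HasDerivAt (fun x : ℝ => -x^2/2) _ t := ((hasDerivAt_pow 2 t).neg.div_const 2)
    convert this using 1
    simp; ring
  have h2 := h1.exp
  have h3 : HasDerivAt (fun x : ℝ => (1/Real.sqrt 2) * Real.exp (-x^2/2)) _ t := h2.const_mul (1 / Real.sqrt 2)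
  have he : gaussPhi = fun x : ℝ => (1/Real.sqrt 2) * Real.exp (-x^2/2) := rfl
  rw [he]
  convert h3 using 1
  beta_reduce; ring

lemma term_hasDeriv (j : ℕ) (y : ℝ) :
    HasDerivAt (fun z => gaussPhi (z - ((j:ℝ) + 1)))
      (-(y - ((j:ℝ)+1)) * gaussPhi (y - ((j:ℝ)+1))) y := by
  have h1 : HasDerivAt (fun z : ℝ => z - ((j:ℝ)+1)) 1 y := (hasDerivAt_id y).sub_const _
  have := (phi_hasDeriv (y - ((j:ℝ)+1))).comp y h1
  simpa [Function.comp_def] using this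

theorem sigma_lipschitz (x y : ℝ) : |gaussSigma x - gaussSigma y| ≤ |x - y| := by
  set R := |x| + |y| + 1 with hR
  set u : ℕ → ℝ := fun j =>
    ((j:ℝ) + (R+1)) * ((1/Real.sqrt 2) * Real.exp (R - 1/2) * Real.exp (-1) ^ j) with hu
  have hr : ‖Real.exp (-1)‖ < 1 := by
    rw [Real.norm_eq_abs, abs_of_pos (Real.exp_pos _)]
    exact Real.exp_lt_one_iff.2 (by norm_num)
  have hsummu : Summable u := by
    have h1 : Summable (fun j : ℕ => (j:ℝ) * Real.exp (-1) ^ j) := by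
      have := summable_pow_mul_geometric_of_norm_lt_one 1 hr (R := ℝ)
      simpa using this
    have h2 : Summable (fun j : ℕ => (R+1) * Real.exp (-1) ^ j) :=
      (summable_geometric_of_lt_one (Real.exp_pos _).le
        (Real.exp_lt_one_iff.2 (by norm_num))).mul_left _
    have h3 : Summable (fun j : ℕ => ((j:ℝ) + (R+1)) * Real.exp (-1) ^ j) := by
      apply (h1.add h2).congr
      intro j; ring
    apply (h3.mul_left ((1/Real.sqrt 2) * Real.exp (R - 1/2))).congr
    intro j; rw [hu]; ring
  have hbound : ∀ (j : ℕ), ∀ t ∈ Set.Ioo (-R) R,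
      ‖-(t - ((j:ℝ)+1)) * gaussPhi (t - ((j:ℝ)+1))‖ ≤ u j := by
    intro j t ht
    obtain ⟨ht1, ht2⟩ := ht
    rw [Real.norm_eq_abs, abs_mul, abs_neg, abs_of_pos (gaussPhi_pos _), gaussPhi_flip]
    have hj : (0:ℝ) ≤ (j:ℝ) := Nat.cast_nonneg j
    have habs : |t - ((j:ℝ)+1)| ≤ R + (j:ℝ) + 1 := by
      rcases abs_cases (t - ((j:ℝ)+1)) with ⟨h1,h2⟩|⟨h1,h2⟩ <;> linarith
    have h1 : Real.exp (-((j:ℝ)+1-t)^2/2) ≤ Real.exp (R - 1/2) * Real.exp (-1) ^ j := by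
      calc Real.exp (-((j:ℝ)+1-t)^2/2) ≤ Real.exp (1/2 - ((j:ℝ)+1-t)) := exp_sq_le _
        _ ≤ Real.exp (R - 1/2 - j) := Real.exp_le_exp.2 (by linarith)
        _ = Real.exp (R - 1/2) * Real.exp (-1) ^ j := by
            rw [← Real.exp_nat_mul, ← Real.exp_add]; ring_nf
    calc |t - ((j:ℝ)+1)| * ((1/Real.sqrt 2) * Real.exp (-((j:ℝ)+1-t)^2/2))
        ≤ (R+(j:ℝ)+1) * ((1/Real.sqrt 2) * (Real.exp (R-1/2) * Real.exp (-1)^j)) := by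
          apply mul_le_mul habs (mul_le_mul_of_nonneg_left h1 (by positivity))
            (by positivity) (by positivity)
      _ = u j := by rw [hu]; ring
  have hRpos : 0 < R := by positivity
  have hx : x ∈ Set.Ioo (-R) R := by
    constructor <;> [skip; skip] <;>
      · rcases abs_cases x with ⟨h1,h2⟩|⟨h1,h2⟩ <;> rcases abs_cases y with ⟨h3,h4⟩|⟨h3,h4⟩ <;>
          rw [hR] <;> linarith
  have hy : y ∈ Set.Ioo (-R) R := by
    constructor <;> [skip; skip] <;>
      · rcases abs_cases x with ⟨h1,h2⟩|⟨h1,h2⟩ <;> rcases abs_cases y with ⟨h3,h4⟩|⟨h3,h4⟩ <;>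
          rw [hR] <;> linarith
  have hderiv : ∀ t ∈ Set.Ioo (-R) R,
      HasDerivAt gaussSigma
        (∑' j : ℕ, (-(t - ((j:ℝ)+1)) * gaussPhi (t - ((j:ℝ)+1)))) t := by
    intro t ht
    exact hasDerivAt_tsum_of_isPreconnected hsummu isOpen_Ioo
      (isPreconnected_Ioo) (fun j z _ => term_hasDeriv j z)
      (fun j z hz => hbound j z hz) hx (summable_phi x) ht
  have key := Convex.norm_image_sub_le_of_norm_hasDerivWithin_le
    (f := gaussSigma)
    (f' := fun t => ∑' j : ℕ, (-(t - ((j:ℝ)+1)) * gaussPhi (t - ((j:ℝ)+1))))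
    (C := 1) (fun t ht => (hderiv t ht).hasDerivWithinAt)
    (fun t ht => by rw [Real.norm_eq_abs]; exact deriv_sum_bound t)
    (convex_Ioo _ _) hy hx
  rw [Real.norm_eq_abs, Real.norm_eq_abs, one_mul] at key
  exact key
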